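/- For a > 0, the function u_2(x,y) = (1/(12a))·(−6x²y + 6ax² + y⁴ − 2ay³ + 2a³y − a⁴) satisfies y·(u_2)_xx + (u_2)_yy = 0, u_2(x,−a) = x², and u_2(x,a) = 0 for all real x. -/
import Mathlib

lemma deriv_quartic (c0 c1 c2 c3 c4 : ℝ) :
    deriv (fun t : ℝ => c0 + c1*t + c2*t^2 + c3*t^3 + c4*t^4)
      = fun t => c1 + 2*c2*t + 3*c3*t^2 + 4*c4*t^3 := by
  funext t
  have h : HasDerivAt (fun t : ℝ => c0 + c1*t + c2*t^2 + c3*t^3 + c4*t^4)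
      (0 + c1*1 + c2*(2*t^1) + c3*(3*t^2) + c4*(4*t^3)) t := by
    exact ((((hasDerivAt_const t c0).add ((hasDerivAt_id t).const_mul c1)).add
      ((hasDerivAt_pow 2 t).const_mul c2)).add
      ((hasDerivAt_pow 3 t).const_mul c3)).add ((hasDerivAt_pow 4 t).const_mul c4)
  rw [h.deriv]; ring

lemma deriv2_quartic (c0 c1 c2 c3 c4 : ℝ) :
    deriv (deriv (fun t : ℝ => c0 + c1*t + c2*t^2 + c3*t^3 + c4*t^4))
      = fun t => 2*c2 + 6*c3*t + 12*c4*t^2 := by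
  rw [deriv_quartic]
  have : (fun t : ℝ => c1 + 2*c2*t + 3*c3*t^2 + 4*c4*t^3)
      = fun t : ℝ => c1 + (2*c2)*t + (3*c3)*t^2 + (4*c4)*t^3 + 0*t^4 := by
    funext t; ring
  rw [this, deriv_quartic]
  funext t; ring

theorem tricomi_mixed_dirichlet_u2 (a : ℝ) (ha : 0 < a)
    (u : ℝ → ℝ → ℝ)
    (hu : ∀ x y : ℝ, u x y =
      (1/(12*a)) * (-6*x^2*y + 6*a*x^2 + y^4 - 2*a*y^3 + 2*a^3*y - a^4)) :
    (∀ x y : ℝ,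
      y * deriv (deriv (fun x' => u x' y)) x + deriv (deriv (fun y' => u x y')) y = 0)
    ∧ (∀ x : ℝ, u x (-a) = x^2) ∧ (∀ x : ℝ, u x a = 0) := by
  refine ⟨fun x y => ?_, fun x => ?_, fun x => ?_⟩
  · have hX : (fun x' => u x' y)
        = fun x' : ℝ => ((1/(12*a))*(y^4 - 2*a*y^3 + 2*a^3*y - a^4)) + 0*x'
          + ((1/(12*a))*(6*a - 6*y))*x'^2 + 0*x'^3 + 0*x'^4 := by
      funext t; rw [hu]; ring
    have hY : (fun y' => u x y')
        = fun y' : ℝ => ((1/(12*a))*(6*a*x^2 - a^4)) + ((1/(12*a))*(2*a^3 - 6*x^2))*y'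
          + 0*y'^2 + ((1/(12*a))*(-2*a))*y'^3 + ((1/(12*a))*1)*y'^4 := by
      funext t; rw [hu]; ring
    rw [hX, hY, deriv2_quartic, deriv2_quartic]
    ring
  · rw [hu]; field_simp; ring
  · rw [hu]; field_simp; ring
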